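/- Let k ≥ 1, η ∈ [0,1), and u ∈ [0,1]^{2k} with 0 < ‖u‖₁ < 2k, where ‖u‖₁ = Σ_{x∈[2k]} u_x. Then the channel information matrix of the leaky-query channel W_u^η satisfies H(W_u^η) = 2η·I_k + (1−η)·δ(u)δ(u)ᵀ, where δ(u) ∈ ℝ^k has coordinates δ(u)_i = (u_{2i−1} − u_{2i}) · √( 2k / (‖u‖₁ (2k − ‖u‖₁)) ). Consequently, the eigenvalues of H(W_u^η) are 2η with multiplicity at least k−1 together with 2η + (1−η)‖δ(u)‖₂², and moreover ‖δ(u)‖₂² ≤ 2, with equality when |u_{2i−1} − u_{2i}| = 1 for every i ∈ [k] and ‖u‖₁ = k. -/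

import Mathlib

open Finset

namespace Paper

/-- A probability distribution on a finite type, given by its mass function. -/
def IsDist {α : Type*} [Fintype α] (p : α → ℝ) : Prop :=
  (∀ a, 0 ≤ p a) ∧ ∑ a, p a = 1

/-- A channel (row-stochastic kernel) from `α` to the finite alphabet `𝒴`. -/
def IsChannel {α 𝒴 : Type*} [Fintype α] [Fintype 𝒴] (W : α → 𝒴 → ℝ) : Prop :=
  ∀ x, IsDist (W x)

/-- Total variation distance between mass functions on a finite type. -/
noncomputable def tvDist {α : Type*} [Fintype α] (p q : α → ℝ) : ℝ :=
  (∑ a, |p a - q a|) / 2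

/-- The element `2i-1` (1-indexed) of `[2k]`, i.e. index `2i` in 0-indexed terms. -/
def lo {k : ℕ} (i : Fin k) : Fin (2 * k) := ⟨2 * i.val, by have := i.isLt; omega⟩

/-- The element `2i` (1-indexed) of `[2k]`, i.e. index `2i+1` in 0-indexed terms. -/
def hi {k : ℕ} (i : Fin k) : Fin (2 * k) := ⟨2 * i.val + 1, by have := i.isLt; omega⟩

/-- The channel information matrix `H(W)`  (division by `0` yields `0` in Lean,
matching the convention that terms with zero denominator vanish). -/
noncomputable def HMat (k : ℕ) {𝒴 : Type*} [Fintype 𝒴] (W : Fin (2 * k) → 𝒴 → ℝ) :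
    Matrix (Fin k) (Fin k) ℝ := fun i j =>
  ∑ y, (W (lo i) y - W (hi i) y) * (W (lo j) y - W (hi j) y) / (∑ x, W x y)

/-- Nuclear norm of a real symmetric matrix (sum of absolute values of eigenvalues). -/
noncomputable def nucNorm {k : ℕ} (A : Matrix (Fin k) (Fin k) ℝ) : ℝ :=
  if h : A.IsHermitian then ∑ i, |h.eigenvalues i| else 0

/-- Operator (spectral) norm of a real symmetric matrix. -/
noncomputable def opNorm {k : ℕ} (A : Matrix (Fin k) (Fin k) ℝ) : ℝ :=
  if h : A.IsHermitian then ⨆ i, |h.eigenvalues i| else 0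

/-- Frobenius norm of a matrix. -/
noncomputable def frobNorm {k : ℕ} (A : Matrix (Fin k) (Fin k) ℝ) : ℝ :=
  Real.sqrt (∑ i, ∑ j, (A i j) ^ 2)

/-- `‖𝒲‖_*`, the maximal nuclear norm of `H(W)` over the family. -/
noncomputable def famNuc (k : ℕ) {𝒴 : Type*} [Fintype 𝒴]
    (𝒲 : Set (Fin (2 * k) → 𝒴 → ℝ)) : ℝ :=
  sSup ((fun W => nucNorm (HMat k W)) '' 𝒲)

/-- `‖𝒲‖_op`, the maximal operator norm of `H(W)` over the family. -/
noncomputable def famOp (k : ℕ) {𝒴 : Type*} [Fintype 𝒴]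
    (𝒲 : Set (Fin (2 * k) → 𝒴 → ℝ)) : ℝ :=
  sSup ((fun W => opNorm (HMat k W)) '' 𝒲)

/-- `‖𝒲‖_F`, the maximal Frobenius norm of `H(W)` over the family. -/
noncomputable def famFrob (k : ℕ) {𝒴 : Type*} [Fintype 𝒴]
    (𝒲 : Set (Fin (2 * k) → 𝒴 → ℝ)) : ℝ :=
  sSup ((fun W => frobNorm (HMat k W)) '' 𝒲)

/-- A deterministic sequentially interactive protocol over `n` users: to each user `t`
and each message prefix it assigns a channel. -/
def Protocol (k n : ℕ) (𝒴 : Type*) : Type _ :=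
  (t : Fin n) → (Fin t.val → 𝒴) → Fin (2 * k) → 𝒴 → ℝ

/-- All channels used by the protocol belong to the family `𝒲`. -/
def UsesFamily {k n : ℕ} {𝒴 : Type*} (π : Protocol k n 𝒴)
    (𝒲 : Set (Fin (2 * k) → 𝒴 → ℝ)) : Prop :=
  ∀ t pre, π t pre ∈ 𝒲

/-- All kernels used by the protocol are genuine channels. -/
def ChannelProtocol {k n : ℕ} {𝒴 : Type*} [Fintype 𝒴] (π : Protocol k n 𝒴) : Prop :=
  ∀ t pre, IsChannel (π t pre)

/-- Distribution of the first `t` messages of the transcript when the inputs are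
i.i.d. with law `p`. -/
noncomputable def prefixDist {k n : ℕ} {𝒴 : Type*} [Fintype 𝒴] (π : Protocol k n 𝒴)
    (p : Fin (2 * k) → ℝ) (t : ℕ) (ht : t ≤ n) (y : Fin t → 𝒴) : ℝ :=
  ∏ s : Fin t, ∑ x, p x *
    π ⟨s.val, lt_of_lt_of_le s.isLt ht⟩ (fun r => y ⟨r.val, lt_trans r.isLt s.isLt⟩) x (y s)

/-- Distribution of the full transcript `Y^n` when the inputs are i.i.d. with law `p`. -/
noncomputable def transDist {k n : ℕ} {𝒴 : Type*} [Fintype 𝒴] (π : Protocol k n 𝒴)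
    (p : Fin (2 * k) → ℝ) (y : Fin n → 𝒴) : ℝ :=
  prefixDist π p n le_rfl y

/-- The uniform distribution on `[2k]`. -/
noncomputable def uniform2k (k : ℕ) : Fin (2 * k) → ℝ := fun _ => (2 * (k : ℝ))⁻¹

/-- An `(n, ε)`-estimator using `𝒲`: a public-coin sequentially interactive protocol
(seed distribution `μ`, protocols `π u`, channels from `𝒲`) together with an estimator
`est` such that, for every input distribution `p`, the probability that the estimate is
more than `ε` away from `p` in total variation is at most `1/100`. -/
def IsEstimator {k n : ℕ} {𝒴 𝒰 : Type*} [Fintype 𝒴] [Fintype 𝒰]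
    (𝒲 : Set (Fin (2 * k) → 𝒴 → ℝ)) (μ : 𝒰 → ℝ) (π : 𝒰 → Protocol k n 𝒴)
    (est : (Fin n → 𝒴) → 𝒰 → Fin (2 * k) → ℝ) (ε : ℝ) : Prop :=
  IsDist μ ∧ (∀ u, UsesFamily (π u) 𝒲) ∧ (∀ u, ChannelProtocol (π u)) ∧
  (∀ y u, IsDist (est y u)) ∧
  ∀ p : Fin (2 * k) → ℝ, IsDist p →
    (∑ u, ∑ y : Fin n → 𝒴, μ u * (transDist (π u) p y *
      (if ε < tvDist (est y u) p then (1 : ℝ) else 0))) ≤ 1 / 100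

/-- An `(n, ε)`-uniformity test using `𝒲`: a public-coin sequentially interactive
protocol together with a randomized decision rule `T` (probability of output `1`)
accepting uniform and rejecting `ε`-far distributions with probability `99/100`. -/
def IsUnifTest {k n : ℕ} {𝒴 𝒰 : Type*} [Fintype 𝒴] [Fintype 𝒰]
    (𝒲 : Set (Fin (2 * k) → 𝒴 → ℝ)) (μ : 𝒰 → ℝ) (π : 𝒰 → Protocol k n 𝒴)
    (T : (Fin n → 𝒴) → 𝒰 → ℝ) (ε : ℝ) : Prop :=
  IsDist μ ∧ (∀ u, UsesFamily (π u) 𝒲) ∧ (∀ u, ChannelProtocol (π u)) ∧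
  (∀ y u, T y u ∈ Set.Icc (0 : ℝ) 1) ∧
  (99 / 100 ≤ ∑ u, ∑ y : Fin n → 𝒴, μ u * (transDist (π u) (uniform2k k) y * (1 - T y u))) ∧
  ∀ p : Fin (2 * k) → ℝ, IsDist p → ε ≤ tvDist p (uniform2k k) →
    99 / 100 ≤ ∑ u, ∑ y : Fin n → 𝒴, μ u * (transDist (π u) p y * T y u)

/-- Mutual information (in nats) of a joint mass function on `A × B`. -/
noncomputable def miNats {A B : Type*} [Fintype A] [Fintype B] (j : A → B → ℝ) : ℝ :=
  ∑ a, ∑ b, j a b * Real.log (j a b / ((∑ b', j a b') * (∑ a', j a' b)))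

/-- Mutual information (in bits) of a joint mass function on `A × B`. -/
noncomputable def miBits {A B : Type*} [Fintype A] [Fintype B] (j : A → B → ℝ) : ℝ :=
  ∑ a, ∑ b, j a b * Real.logb 2 (j a b / ((∑ b', j a b') * (∑ a', j a' b)))

/-- Binary entropy function (in bits). -/
noncomputable def binEnt (t : ℝ) : ℝ :=
  -(t * Real.logb 2 t) - (1 - t) * Real.logb 2 (1 - t)

/-- `±1` encoding of a Boolean. -/
def pm (b : Bool) : ℝ := if b then 1 else -1

/-- The joint mass function of `(Z_i, Y)` obtained from a joint mass function of `(Z, Y)`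
for `Z ∈ {−1,+1}^k` (encoded via Booleans). -/
noncomputable def coordJoint {k : ℕ} {𝒴 : Type*} [Fintype 𝒴]
    (j : (Fin k → Bool) → 𝒴 → ℝ) (i : Fin k) : Bool → 𝒴 → ℝ :=
  fun b y => ∑ z : Fin k → Bool, if z i = b then j z y else 0

/-- The Paninski perturbation `p_z` of the uniform distribution on `[2k]`:
`p_z(2i−1) = (1+2ε z_i)/(2k)` and `p_z(2i) = (1−2ε z_i)/(2k)` (1-indexed). -/
noncomputable def paninski (k : ℕ) (ε : ℝ) (z : Fin k → Bool) : Fin (2 * k) → ℝ :=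
  fun x => (1 + (if x.val % 2 = 0 then (1 : ℝ) else -1) * (2 * ε) *
    pm (z ⟨x.val / 2, by have := x.isLt; omega⟩)) / (2 * k)

/-- Chi-square divergence between mass functions on a finite type. -/
noncomputable def chiSq {α : Type*} [Fintype α] (P Q : α → ℝ) : ℝ :=
  ∑ y, (P y - Q y) ^ 2 / Q y

/-- Kullback–Leibler divergence (in nats) between mass functions on a finite type. -/
noncomputable def klDivNats {α : Type*} [Fintype α] (P Q : α → ℝ) : ℝ :=
  ∑ y, P y * Real.log (P y / Q y)

/-- The leaky-query channel `W_u^η` on output alphabet `[2k] ∪ {1*, 0*}`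
(`Sum.inr true = 1*`, `Sum.inr false = 0*`). -/
noncomputable def leaky (k : ℕ) (η : ℝ) (u : Fin (2 * k) → ℝ) :
    Fin (2 * k) → (Fin (2 * k) ⊕ Bool) → ℝ :=
  fun x y => Sum.elim (fun x' => if x' = x then η else 0)
    (fun b => if b then (1 - η) * u x else (1 - η) * (1 - u x)) y

/-- The vector `δ(u)` associated with a leaky-query channel. -/
noncomputable def leakyDelta (k : ℕ) (u : Fin (2 * k) → ℝ) : Fin k → ℝ :=
  fun i => (u (lo i) - u (hi i)) *
    Real.sqrt ((2 * (k : ℝ)) / ((∑ x, u x) * (2 * (k : ℝ) - ∑ x, u x)))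

/-- The partial-erasure channel `W_{x*}` on output alphabet `[2k] ∪ {⊥}`. -/
noncomputable def eraseCh (k : ℕ) (η : ℝ) (xs : Fin (2 * k)) :
    Fin (2 * k) → (Fin (2 * k) ⊕ Unit) → ℝ :=
  fun x y => Sum.elim (fun x' => if x' = x then (if x = xs then 1 else η) else 0)
    (fun _ => if x = xs then 0 else 1 - η) y

/-- The family of all `ρ`-locally differentially private channels from `[2k]` to `𝒴`. -/
def ldpFamily (k : ℕ) {𝒴 : Type*} [Fintype 𝒴] (ρ : ℝ) :
    Set (Fin (2 * k) → 𝒴 → ℝ) :=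
  { W | IsChannel W ∧ ∀ x x' y, W x y ≤ Real.exp ρ * W x' y }


/-! ### Auxiliary lemmas for `leaky_query_channel_matrix` -/

open Polynomial in
lemma aux_eval_charpoly' {k : ℕ} (A : Matrix (Fin k) (Fin k) ℝ) (t : ℝ) :
    A.charpoly.eval t = (t • (1 : Matrix (Fin k) (Fin k) ℝ) - A).det := by
  rw [Matrix.charpoly, ← Polynomial.coe_evalRingHom, RingHom.map_det]
  congr 1
  ext i j
  rcases eq_or_ne i j with rfl | h
  · simp [Matrix.charmatrix_apply_eq, Matrix.one_apply_eq]
  · simp [Matrix.charmatrix_apply_ne _ _ _ h, Matrix.one_apply_ne h]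

open Polynomial in
lemma aux_charpoly_hermitian {k : ℕ} (A : Matrix (Fin k) (Fin k) ℝ) (hA : A.IsHermitian) :
    A.charpoly = ∏ i, (X - C (hA.eigenvalues i)) := by
  apply Polynomial.funext
  intro t
  rw [aux_eval_charpoly', Polynomial.eval_prod]
  simp only [Polynomial.eval_sub, Polynomial.eval_X, Polynomial.eval_C]
  set U : Matrix (Fin k) (Fin k) ℝ := ↑(Matrix.IsHermitian.eigenvectorUnitary hA) with hU
  have hUU : U * star U = 1 := (Matrix.mem_unitaryGroup_iff).mp
    (Matrix.IsHermitian.eigenvectorUnitary hA).2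
  have hst : A = U * Matrix.diagonal (RCLike.ofReal ∘ hA.eigenvalues) * star U :=
    hA.spectral_theorem
  have key : t • (1 : Matrix (Fin k) (Fin k) ℝ) - A
      = U * (Matrix.diagonal (fun i => t - hA.eigenvalues i)) * star U := by
    have h1 : Matrix.diagonal (fun i => t - hA.eigenvalues i)
        = t • (1 : Matrix (Fin k) (Fin k) ℝ)
          - Matrix.diagonal (RCLike.ofReal ∘ hA.eigenvalues) := by
      rw [Matrix.smul_one_eq_diagonal, ← Matrix.diagonal_sub]
      congr 1
    rw [h1, Matrix.mul_sub, Matrix.sub_mul, ← hst, Matrix.mul_smul, Matrix.mul_one,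
      Matrix.smul_mul, hUU]
  have hdet : U.det * (star U).det = 1 := by rw [← Matrix.det_mul, hUU, Matrix.det_one]
  rw [key, Matrix.det_mul, Matrix.det_mul, Matrix.det_diagonal, mul_right_comm, hdet, one_mul]

open scoped Matrix in
lemma aux_det_shift {k : ℕ} (w : Fin k → ℝ) (c r t : ℝ) (ht : t ≠ c) (hk : 1 ≤ k) :
    (t • (1 : Matrix (Fin k) (Fin k) ℝ)
      - (c • (1 : Matrix (Fin k) (Fin k) ℝ) + r • Matrix.vecMulVec w w)).det
    = (t - c) ^ (k - 1) * (t - (c + r * ∑ i, w i ^ 2)) := by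
  obtain ⟨m, rfl⟩ : ∃ m, k = m + 1 := ⟨k - 1, by omega⟩
  have htc : t - c ≠ 0 := sub_ne_zero.mpr ht
  have hinv : (t - c) * (t - c)⁻¹ = 1 := mul_inv_cancel₀ htc
  have h0 : t • (1 : Matrix (Fin (m + 1)) (Fin (m + 1)) ℝ)
      - (c • (1 : Matrix (Fin (m + 1)) (Fin (m + 1)) ℝ) + r • Matrix.vecMulVec w w)
      = (t - c) • ((1 : Matrix (Fin (m + 1)) (Fin (m + 1)) ℝ)
          + Matrix.replicateCol Unit (-(((t - c)⁻¹ * r) • w)) * Matrix.replicateRow Unit w) := by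
    ext i j
    rcases eq_or_ne i j with rfl | h
    · simp only [Matrix.sub_apply, Matrix.add_apply, Matrix.smul_apply, Matrix.one_apply_eq,
        Matrix.vecMulVec_apply, Matrix.mul_apply, Matrix.replicateCol_apply, Matrix.replicateRow_apply,
        Finset.univ_unique, Finset.sum_singleton, Pi.neg_apply, Pi.smul_apply, smul_eq_mul]
      linear_combination (r * w i * w i) * hinv
    · simp only [Matrix.sub_apply, Matrix.add_apply, Matrix.smul_apply, Matrix.one_apply_ne h,
        Matrix.vecMulVec_apply, Matrix.mul_apply, Matrix.replicateCol_apply, Matrix.replicateRow_apply,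
        Finset.univ_unique, Finset.sum_singleton, Pi.neg_apply, Pi.smul_apply, smul_eq_mul]
      linear_combination (r * w i * w j) * hinv
  rw [h0, Matrix.det_smul, Matrix.det_one_add_replicateCol_mul_replicateRow]
  have hS2 : w ⬝ᵥ (-(((t - c)⁻¹ * r) • w)) = -((t - c)⁻¹ * r) * ∑ i, w i ^ 2 := by
    simp only [dotProduct, Pi.neg_apply, Pi.smul_apply, smul_eq_mul, Finset.mul_sum]
    refine Finset.sum_congr rfl fun i _ => by ring
  rw [hS2]
  have hcard : Fintype.card (Fin (m + 1)) = m + 1 := Fintype.card_fin _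
  rw [hcard, pow_succ, Nat.add_sub_cancel]
  have hlast : (t - c) * (1 + -((t - c)⁻¹ * r) * ∑ i, w i ^ 2)
      = t - (c + r * ∑ i, w i ^ 2) := by
    linear_combination (-(r * ∑ i, w i ^ 2)) * hinv
  rw [mul_assoc, hlast]

open Polynomial in
lemma aux_eig_multiset {k : ℕ} (hk : 1 ≤ k) (A : Matrix (Fin k) (Fin k) ℝ)
    (hA : A.IsHermitian) (w : Fin k → ℝ) (c r : ℝ)
    (hAeq : A = c • (1 : Matrix (Fin k) (Fin k) ℝ) + r • Matrix.vecMulVec w w) :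
    Finset.univ.val.map hA.eigenvalues
      = (c + r * ∑ i, w i ^ 2) ::ₘ Multiset.replicate (k - 1) c := by
  set lam := c + r * ∑ i, w i ^ 2 with hlam
  have hq : A.charpoly
      = ((lam ::ₘ Multiset.replicate (k - 1) c).map fun a => X - C a).prod := by
    have hqq : ((lam ::ₘ Multiset.replicate (k - 1) c).map fun a => X - C a).prod
        = (X - C lam) * (X - C c) ^ (k - 1) := by
      rw [Multiset.map_cons, Multiset.prod_cons, Multiset.map_replicate, Multiset.prod_replicate]
    rw [hqq]
    apply Polynomial.eq_of_infinite_eval_eq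
    refine Set.Infinite.mono ?_ ((Set.finite_singleton c).infinite_compl)
    · intro t ht
      have ht' : t ≠ c := ht
      show A.charpoly.eval t = _
      rw [aux_eval_charpoly', hAeq, aux_det_shift w c r t ht' hk]
      simp only [Polynomial.eval_mul, Polynomial.eval_pow, Polynomial.eval_sub,
        Polynomial.eval_X, Polynomial.eval_C]
      ring
  have h1 : A.charpoly = ((Finset.univ.val.map hA.eigenvalues).map fun a => X - C a).prod := by
    rw [aux_charpoly_hermitian A hA, Finset.prod_eq_multiset_prod, Multiset.map_map]
    rfl
  have h2 := congrArg Polynomial.roots (h1.symm.trans hq)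
  rwa [Polynomial.roots_multiset_prod_X_sub_C, Polynomial.roots_multiset_prod_X_sub_C] at h2

lemma aux_lo_ne_hi {k : ℕ} (i j : Fin k) : lo i ≠ hi j := by
  simp only [lo, hi, ne_eq, Fin.mk.injEq]; omega

lemma aux_lo_inj {k : ℕ} {i j : Fin k} (h : lo i = lo j) : i = j := by
  simp only [lo, Fin.mk.injEq] at h; exact Fin.ext (by omega)

lemma aux_hi_inj {k : ℕ} {i j : Fin k} (h : hi i = hi j) : i = j := by
  simp only [hi, Fin.mk.injEq] at h; exact Fin.ext (by omega)

lemma aux_mul_div_self (η : ℝ) : η * η / η = η := by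
  rcases eq_or_ne η 0 with h | h
  · simp [h]
  · field_simp

lemma aux_sum_one_2k (k : ℕ) : ∑ _x : Fin (2 * k), (1 : ℝ) = 2 * (k : ℝ) := by
  simp

def pairEquiv (k : ℕ) : Fin k × Bool ≃ Fin (2 * k) where
  toFun p := if p.2 then hi p.1 else lo p.1
  invFun x := (⟨x.val / 2, by have := x.isLt; omega⟩, decide (x.val % 2 = 1))
  left_inv := by
    rintro ⟨i, b⟩
    cases b <;> simp only [lo, hi, if_true, if_false] <;>
      refine Prod.ext (Fin.ext ?_) ?_ <;> simp <;> omega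
  right_inv := by
    intro x
    by_cases h : x.val % 2 = 1 <;>
      simp only [h, decide_eq_true_eq] <;>
      · apply Fin.ext; simp [lo, hi]; omega

lemma aux_sum_split {k : ℕ} (f : Fin (2 * k) → ℝ) :
    ∑ x, f x = ∑ i : Fin k, (f (lo i) + f (hi i)) := by
  rw [← Equiv.sum_comp (pairEquiv k) f, Fintype.sum_prod_type]
  refine Finset.sum_congr rfl fun i _ => ?_
  rw [Fintype.sum_bool]
  simp [pairEquiv, add_comm]

lemma aux_HMat_leaky (k : ℕ) (hk : 1 ≤ k) (η : ℝ) (hη1 : η < 1)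
    (u : Fin (2 * k) → ℝ)
    (h1 : 0 < ∑ x, u x) (h2 : ∑ x, u x < 2 * (k : ℝ)) :
    HMat k (leaky k η u)
        = (2 * η) • (1 : Matrix (Fin k) (Fin k) ℝ)
          + (1 - η) • Matrix.vecMulVec (leakyDelta k u) (leakyDelta k u) := by
  set S := ∑ x, u x with hS
  have hS0 : S ≠ 0 := ne_of_gt h1
  have hS2 : 2 * (k : ℝ) - S ≠ 0 := by linarith
  have hη' : (1 : ℝ) - η ≠ 0 := by linarith
  have hk0 : (0:ℝ) < (k:ℝ) := by exact_mod_cast Nat.pos_of_ne_zero (by omega)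
  have hSprod : (0:ℝ) < S * (2 * (k : ℝ) - S) := mul_pos h1 (by linarith)
  have hc : (0:ℝ) ≤ 2 * (k : ℝ) / (S * (2 * (k : ℝ) - S)) :=
    le_of_lt (div_pos (by positivity) hSprod)
  funext i j
  show (∑ y, _) = _
  rw [Fintype.sum_sum_type, Fintype.sum_bool]
  have hden1 : ∀ x' : Fin (2 * k), (∑ x, leaky k η u x (Sum.inl x')) = η := by
    intro x'; simp [leaky]
  have hdenT : (∑ x, leaky k η u x (Sum.inr true)) = (1 - η) * S := by
    simp [leaky, ← Finset.mul_sum]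
    exact Or.inl hS.symm
  have hdenF : (∑ x, leaky k η u x (Sum.inr false)) = (1 - η) * (2 * (k : ℝ) - S) := by
    simp only [leaky, Sum.elim_inr, if_false, Bool.false_eq_true]
    rw [← Finset.mul_sum, Finset.sum_sub_distrib, aux_sum_one_2k]
  have hinl : (∑ x' : Fin (2 * k),
      (leaky k η u (lo i) (Sum.inl x') - leaky k η u (hi i) (Sum.inl x')) *
        (leaky k η u (lo j) (Sum.inl x') - leaky k η u (hi j) (Sum.inl x')) /
        (∑ x, leaky k η u x (Sum.inl x')))
      = if i = j then 2 * η else 0 := by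
    simp only [hden1]
    simp only [leaky, Sum.elim_inl]
    rcases eq_or_ne i j with rfl | hij
    · rw [if_pos rfl]
      have : ∀ x' : Fin (2 * k),
          ((if x' = lo i then η else 0) - (if x' = hi i then η else 0)) *
          ((if x' = lo i then η else 0) - (if x' = hi i then η else 0)) / η
          = (if x' = lo i then η else 0) + (if x' = hi i then η else 0) := by
        intro x'
        rcases eq_or_ne x' (lo i) with rfl | hl
        · rw [if_pos rfl, if_neg (aux_lo_ne_hi i i)]
          simpa using aux_mul_div_self η
        · rw [if_neg hl]
          rcases eq_or_ne x' (hi i) with rfl | hh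
          · rw [if_pos rfl]
            simpa [neg_mul_neg] using aux_mul_div_self η
          · rw [if_neg hh]; simp
      rw [Finset.sum_congr rfl fun x' _ => this x', Finset.sum_add_distrib]
      simp [two_mul]
    · rw [if_neg hij]
      refine Finset.sum_eq_zero fun x' _ => ?_
      rcases eq_or_ne x' (lo i) with rfl | hl
      · rw [if_neg (show ¬(lo i = lo j) from fun h => hij (aux_lo_inj h)),
          if_neg (show ¬(lo i = hi j) from aux_lo_ne_hi i j)]
        simp
      · rw [if_neg hl]
        rcases eq_or_ne x' (hi i) with rfl | hh
        · rw [if_neg (show ¬(hi i = lo j) from fun h => aux_lo_ne_hi j i h.symm),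
            if_neg (show ¬(hi i = hi j) from fun h => hij (aux_hi_inj h))]
          simp
        · rw [if_neg hh]; simp
  rw [hinl, hdenT, hdenF]
  simp only [leaky, Sum.elim_inr, if_true, if_false, Bool.false_eq_true]
  have hrhs : ((2 * η) • (1 : Matrix (Fin k) (Fin k) ℝ)
      + (1 - η) • Matrix.vecMulVec (leakyDelta k u) (leakyDelta k u)) i j
      = (if i = j then 2 * η else 0)
        + (1 - η) * ((u (lo i) - u (hi i)) * (u (lo j) - u (hi j))
            * (2 * (k : ℝ) / (S * (2 * (k : ℝ) - S)))) := by
    simp only [Matrix.add_apply, Matrix.smul_apply, Matrix.one_apply, Matrix.vecMulVec_apply,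
      smul_eq_mul, mul_ite, mul_one, mul_zero, leakyDelta, ← hS]
    congr 1
    rw [show (u (lo i) - u (hi i)) * Real.sqrt (2 * (k:ℝ) / (S * (2 * (k:ℝ) - S))) *
        ((u (lo j) - u (hi j)) * Real.sqrt (2 * (k:ℝ) / (S * (2 * (k:ℝ) - S))))
      = (u (lo i) - u (hi i)) * (u (lo j) - u (hi j)) *
        (Real.sqrt (2 * (k:ℝ) / (S * (2 * (k:ℝ) - S))) *
         Real.sqrt (2 * (k:ℝ) / (S * (2 * (k:ℝ) - S)))) by ring]
    rw [Real.mul_self_sqrt hc]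
  rw [hrhs]
  congr 1
  field_simp
  ring


/-- Structure of the channel information matrix of the leaky-query
channel: `H(W_u^η) = 2η I_k + (1−η) δ(u)δ(u)ᵀ`; its eigenvalues are `2η` with
multiplicity `k−1` together with `2η + (1−η)‖δ(u)‖₂²`; and `‖δ(u)‖₂² ≤ 2`, with
equality when `|u_{2i−1} − u_{2i}| = 1` for all `i` and `‖u‖₁ = k`. -/
theorem leaky_query_channel_matrix
    (k : ℕ) (hk : 1 ≤ k) (η : ℝ) (hη0 : 0 ≤ η) (hη1 : η < 1)
    (u : Fin (2 * k) → ℝ) (hu : ∀ x, u x ∈ Set.Icc (0 : ℝ) 1)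
    (h1 : 0 < ∑ x, u x) (h2 : ∑ x, u x < 2 * (k : ℝ)) :
    HMat k (leaky k η u)
        = (2 * η) • (1 : Matrix (Fin k) (Fin k) ℝ)
          + (1 - η) • Matrix.vecMulVec (leakyDelta k u) (leakyDelta k u) ∧
      (∃ hH : (HMat k (leaky k η u)).IsHermitian,
        Finset.univ.val.map hH.eigenvalues =
          (2 * η + (1 - η) * ∑ i : Fin k, (leakyDelta k u i) ^ 2) ::ₘ
            Multiset.replicate (k - 1) (2 * η)) ∧
      (∑ i : Fin k, (leakyDelta k u i) ^ 2 ≤ 2) ∧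
      ((∀ i : Fin k, |u (lo i) - u (hi i)| = 1) ∧ (∑ x, u x) = (k : ℝ) →
        ∑ i : Fin k, (leakyDelta k u i) ^ 2 = 2) := by
  have hk0 : (0:ℝ) < (k:ℝ) := by exact_mod_cast Nat.pos_of_ne_zero (by omega)
  have hSprod : (0:ℝ) < (∑ x, u x) * (2 * (k : ℝ) - ∑ x, u x) := mul_pos h1 (by linarith)
  have hc0 : (0:ℝ) ≤ 2 * (k : ℝ) / ((∑ x, u x) * (2 * (k : ℝ) - ∑ x, u x)) :=
    le_of_lt (div_pos (by positivity) hSprod)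
  have hmat := aux_HMat_leaky k hk η hη1 u h1 h2
  have hδsq : ∀ i : Fin k, (leakyDelta k u i) ^ 2
      = (u (lo i) - u (hi i)) ^ 2 *
        (2 * (k : ℝ) / ((∑ x, u x) * (2 * (k : ℝ) - ∑ x, u x))) := by
    intro i
    rw [leakyDelta, mul_pow, Real.sq_sqrt hc0]
  have hsum : ∑ i : Fin k, (leakyDelta k u i) ^ 2
      = (∑ i : Fin k, (u (lo i) - u (hi i)) ^ 2) *
        (2 * (k : ℝ) / ((∑ x, u x) * (2 * (k : ℝ) - ∑ x, u x))) := by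
    rw [Finset.sum_congr rfl fun i _ => hδsq i, ← Finset.sum_mul]
  have hH : (HMat k (leaky k η u)).IsHermitian := by
    rw [hmat]
    unfold Matrix.IsHermitian
    ext i j
    simp only [Matrix.conjTranspose_apply, Matrix.add_apply, Matrix.smul_apply,
      Matrix.one_apply, Matrix.vecMulVec_apply, smul_eq_mul, star_trivial]
    rcases eq_or_ne i j with rfl | h
    · ring
    · rw [if_neg h, if_neg (Ne.symm h)]; ring
  refine ⟨hmat, ⟨hH, ?_⟩, ?_, ?_⟩
  · exact aux_eig_multiset hk _ hH (leakyDelta k u) (2 * η) (1 - η) hmat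
  · -- ∑ δ² ≤ 2
    have hpt : ∀ i : Fin k, (u (lo i) - u (hi i)) ^ 2
        ≤ 2 * (u (lo i) + u (hi i)) - (u (lo i) + u (hi i)) ^ 2 := by
      intro i
      have ha := hu (lo i); have hb := hu (hi i)
      obtain ⟨ha1, ha2⟩ := ha; obtain ⟨hb1, hb2⟩ := hb
      nlinarith
    have hsS : ∑ i : Fin k, (u (lo i) + u (hi i)) = ∑ x, u x := (aux_sum_split u).symm
    have hcs : (∑ x, u x) ^ 2 ≤ (k : ℝ) * ∑ i : Fin k, (u (lo i) + u (hi i)) ^ 2 := by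
      have := sq_sum_le_card_mul_sum_sq
        (s := (Finset.univ : Finset (Fin k))) (f := fun i => u (lo i) + u (hi i))
      rw [hsS] at this
      simpa using this
    have hd : ∑ i : Fin k, (u (lo i) - u (hi i)) ^ 2
        ≤ 2 * (∑ x, u x) - (∑ x, u x) ^ 2 / (k : ℝ) := by
      have h3 : ∑ i : Fin k, (u (lo i) - u (hi i)) ^ 2
          ≤ ∑ i : Fin k, (2 * (u (lo i) + u (hi i)) - (u (lo i) + u (hi i)) ^ 2) :=
        Finset.sum_le_sum fun i _ => hpt i
      rw [Finset.sum_sub_distrib, ← Finset.mul_sum, hsS] at h3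
      have h4 : (∑ x, u x) ^ 2 / (k : ℝ) ≤ ∑ i : Fin k, (u (lo i) + u (hi i)) ^ 2 := by
        rw [div_le_iff₀ hk0]
        nlinarith [hcs]
      linarith
    have hkey : (2 * (∑ x, u x) - (∑ x, u x) ^ 2 / (k : ℝ)) *
        (2 * (k : ℝ) / ((∑ x, u x) * (2 * (k : ℝ) - ∑ x, u x))) = 2 := by
      have hA : (2 * (k:ℝ) - ∑ x, u x) ≠ 0 := by linarith
      have hB : (∑ x, u x) ≠ 0 := ne_of_gt h1
      have hC : (k:ℝ) ≠ 0 := ne_of_gt hk0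
      field_simp
    rw [hsum]
    calc (∑ i : Fin k, (u (lo i) - u (hi i)) ^ 2) *
          (2 * (k : ℝ) / ((∑ x, u x) * (2 * (k : ℝ) - ∑ x, u x)))
        ≤ (2 * (∑ x, u x) - (∑ x, u x) ^ 2 / (k : ℝ)) *
          (2 * (k : ℝ) / ((∑ x, u x) * (2 * (k : ℝ) - ∑ x, u x))) :=
          mul_le_mul_of_nonneg_right hd hc0
      _ = 2 := hkey
  · rintro ⟨habs, hSk⟩
    have hone : ∀ i : Fin k, (u (lo i) - u (hi i)) ^ 2 = 1 := by
      intro i; rw [← sq_abs, habs i, one_pow]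
    rw [hsum, Finset.sum_congr rfl fun i _ => hone i, Finset.sum_const, Finset.card_univ,
      Fintype.card_fin, nsmul_eq_mul, mul_one, hSk]
    have h : 2 * (k:ℝ) - (k:ℝ) = (k:ℝ) := by ring
    rw [h]
    field_simp

end Paper
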